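/- arXiv:1409.4659 — 2 statements merged into one kernel-verified Lean document; each statement's English description precedes it below -/
import Mathlib

section
/- If F ⊆ X is equi-homogeneous then for any fixed point x ∈ F: (i) dim_A F equals the infimum over all s ≥ 0 such that for every δ₀ > 0 there exists C > 0 with N(B_δ(x) ∩ F, ρ) ≤ C (δ/ρ)^s for all δ, ρ with 0 < ρ < δ ≤ δ₀; and (ii) dim_LA F equals the supremum over all s ≥ 0 such that for every δ₀ > 0 there exists C > 0 with N(B_δ(x) ∩ F, ρ) ≥ C (δ/ρ)^s for all δ, ρ with 0 < ρ < δ ≤ δ₀. -/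
open Set Metric Filter Bornology MeasureTheory
open scoped ENNReal NNReal

/-- `coverNumber F δ` : the minimum number of closed `δ`-balls with centres in
`F` needed to cover `F` (`∞` if there is no finite such cover). -/
noncomputable def coverNumber {X : Type*} [MetricSpace X] (F : Set X) (δ : ℝ) : ℝ≥0∞ :=
  ⨅ (t : Finset X) (_ : (t : Set X) ⊆ F) (_ : F ⊆ ⋃ x ∈ t, closedBall x δ),
    (t.card : ℝ≥0∞)

/-- `F` is equi-homogeneous: for every `δ₀ > 0` there are `M ≥ 1` and
`c₁, c₂ > 0` with
`sup_{x∈F} N(B_δ(x) ∩ F, ρ) ≤ M inf_{x∈F} N(B_{c₁δ}(x) ∩ F, c₂ρ)`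
for all `0 < ρ < δ ≤ δ₀`. -/
def EquiHomogeneous {X : Type*} [MetricSpace X] (F : Set X) : Prop :=
  ∀ δ₀ : ℝ, 0 < δ₀ → ∃ M c₁ c₂ : ℝ, 1 ≤ M ∧ 0 < c₁ ∧ 0 < c₂ ∧
    ∀ δ ρ : ℝ, 0 < ρ → ρ < δ → δ ≤ δ₀ →
      (⨆ x ∈ F, coverNumber (closedBall x δ ∩ F) ρ) ≤
        ENNReal.ofReal M * (⨅ x ∈ F, coverNumber (closedBall x (c₁ * δ) ∩ F) (c₂ * ρ))

/-- The Assouad dimension of `F`. -/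
noncomputable def assouadDim {X : Type*} [MetricSpace X] (F : Set X) : ℝ :=
  sInf {s : ℝ | 0 ≤ s ∧ ∀ δ₀ : ℝ, 0 < δ₀ → ∃ C : ℝ, 0 < C ∧
    ∀ x ∈ F, ∀ δ ρ : ℝ, 0 < ρ → ρ < δ → δ ≤ δ₀ →
      coverNumber (closedBall x δ ∩ F) ρ ≤ ENNReal.ofReal (C * (δ / ρ) ^ s)}

/-- The lower Assouad dimension of `F`. -/
noncomputable def lowerAssouadDim {X : Type*} [MetricSpace X] (F : Set X) : ℝ :=
  sSup {s : ℝ | 0 ≤ s ∧ ∀ δ₀ : ℝ, 0 < δ₀ → ∃ C : ℝ, 0 < C ∧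
    ∀ x ∈ F, ∀ δ ρ : ℝ, 0 < ρ → ρ < δ → δ ≤ δ₀ →
      ENNReal.ofReal (C * (δ / ρ) ^ s) ≤ coverNumber (closedBall x δ ∩ F) ρ}

section Aux

variable {X : Type*} [MetricSpace X]

lemma coverNumber_le_card (F' : Set X) (δ : ℝ) (t : Finset X)
    (h1 : (t : Set X) ⊆ F') (h2 : F' ⊆ ⋃ x ∈ t, closedBall x δ) :
    coverNumber F' δ ≤ t.card :=
  iInf_le_of_le t (iInf_le_of_le h1 (iInf_le _ h2))

lemma coverNumber_le_one {F' : Set X} {z : X} {r' : ℝ} (hz : z ∈ F')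
    (h : ∀ y ∈ F', dist y z ≤ r') : coverNumber F' r' ≤ 1 := by
  have := coverNumber_le_card F' r' {z} (by simpa using hz)
    (fun y hy => by simpa [mem_closedBall] using h y hy)
  simpa using this

lemma one_le_coverNumber {F' : Set X} (hne : F'.Nonempty) (r : ℝ) :
    1 ≤ coverNumber F' r := by
  refine le_iInf fun t => le_iInf fun h1 => le_iInf fun h2 => ?_
  obtain ⟨y, hy⟩ := hne
  obtain ⟨z, hz, -⟩ := mem_iUnion₂.1 (h2 hy)
  exact_mod_cast Nat.one_le_cast.2 (Finset.card_pos.2 ⟨z, hz⟩)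

lemma coverNumber_double (A B : Set X) (hAB : A ⊆ B) (r : ℝ) :
    coverNumber A (2 * r) ≤ coverNumber B r := by
  classical
  rcases A.eq_empty_or_nonempty with hA | ⟨a₀, ha₀⟩
  · have h0 : coverNumber A (2 * r) ≤ ((∅ : Finset X).card : ℝ≥0∞) :=
      coverNumber_le_card _ _ ∅ (by simp) (by simp [hA])
    simp only [Finset.card_empty, Nat.cast_zero, nonpos_iff_eq_zero] at h0
    simp [h0]
  refine le_iInf fun t => le_iInf fun h1 => le_iInf fun h2 => ?_
  set f : X → X := fun z =>
    if h : (closedBall z r ∩ A).Nonempty then h.choose else a₀ with hf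
  have hfA : ∀ z, f z ∈ A := by
    intro z; rw [hf]; dsimp only; split_ifs with h
    exacts [h.choose_spec.2, ha₀]
  refine le_trans (coverNumber_le_card A (2 * r) (t.image f) ?_ ?_) ?_
  · intro y hy
    simp only [Finset.coe_image] at hy
    obtain ⟨z, -, rfl⟩ := hy
    exact hfA z
  · intro a ha
    obtain ⟨z, hz, hdz⟩ := mem_iUnion₂.1 (h2 (hAB ha))
    refine mem_iUnion₂.2 ⟨f z, Finset.mem_image_of_mem f hz, ?_⟩
    have hne : (closedBall z r ∩ A).Nonempty := ⟨a, hdz, ha⟩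
    have hfz : f z ∈ closedBall z r ∩ A := by
      rw [hf]; dsimp only; rw [dif_pos hne]; exact hne.choose_spec
    rw [mem_closedBall]
    have hd1 : dist a z ≤ r := mem_closedBall.1 hdz
    have hd2 : dist (f z) z ≤ r := mem_closedBall.1 hfz.1
    calc dist a (f z) ≤ dist a z + dist z (f z) := dist_triangle _ _ _
      _ ≤ r + r := add_le_add hd1 (by rw [dist_comm]; exact hd2)
      _ = 2 * r := by ring
  · exact_mod_cast Finset.card_image_le

lemma equiHomogeneous_upgrade {F : Set X} (heh : EquiHomogeneous F)
    (δ₀ : ℝ) (h : 0 < δ₀) :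
    ∃ M c₁ c₂ : ℝ, 1 ≤ M ∧ 1 ≤ c₁ ∧ 0 < c₂ ∧
      ∀ δ ρ : ℝ, 0 < ρ → ρ < δ → δ ≤ δ₀ →
        (⨆ x ∈ F, coverNumber (closedBall x δ ∩ F) ρ) ≤
          ENNReal.ofReal M * (⨅ x ∈ F, coverNumber (closedBall x (c₁ * δ) ∩ F) (c₂ * ρ)) := by
  obtain ⟨M, c₁, c₂, hM, hc₁, hc₂, hEH⟩ := heh δ₀ h
  refine ⟨M, max c₁ 1, c₂ / 2, hM, le_max_right _ _, by positivity,
    fun δ ρ hρ hρδ hδ => ?_⟩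
  have hδpos : 0 < δ := hρ.trans hρδ
  refine (hEH δ ρ hρ hρδ hδ).trans (mul_le_mul_right ?_ _)
  refine le_iInf fun y => le_iInf fun hy => ?_
  refine le_trans (iInf_le_of_le y (iInf_le _ hy)) ?_
  have hrw : c₂ * ρ = 2 * (c₂ / 2 * ρ) := by ring
  rw [hrw]
  refine coverNumber_double _ _ (inter_subset_inter_left _
    (closedBall_subset_closedBall ?_)) _
  have := le_max_left c₁ 1
  nlinarith

end Aux

/-- For an equi-homogeneous set `F`, the Assouad and lower Assouad
dimensions may be computed from the local covers at any fixed point `x ∈ F`. -/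
theorem assouadDims_eq_local_of_equiHomogeneous {X : Type*} [MetricSpace X]
    (F : Set X) (heh : EquiHomogeneous F) (x : X) (hx : x ∈ F) :
    assouadDim F =
      sInf {s : ℝ | 0 ≤ s ∧ ∀ δ₀ : ℝ, 0 < δ₀ → ∃ C : ℝ, 0 < C ∧
        ∀ δ ρ : ℝ, 0 < ρ → ρ < δ → δ ≤ δ₀ →
          coverNumber (closedBall x δ ∩ F) ρ ≤ ENNReal.ofReal (C * (δ / ρ) ^ s)} ∧
    lowerAssouadDim F =
      sSup {s : ℝ | 0 ≤ s ∧ ∀ δ₀ : ℝ, 0 < δ₀ → ∃ C : ℝ, 0 < C ∧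
        ∀ δ ρ : ℝ, 0 < ρ → ρ < δ → δ ≤ δ₀ →
          ENNReal.ofReal (C * (δ / ρ) ^ s) ≤ coverNumber (closedBall x δ ∩ F) ρ} := by
  constructor
  · -- Assouad dimension
    unfold assouadDim
    refine congrArg sInf (Set.Subset.antisymm ?_ ?_)
    · rintro s ⟨hs0, h⟩
      exact ⟨hs0, fun δ₀ hδ₀ => (h δ₀ hδ₀).imp fun C hC =>
        ⟨hC.1, fun δ ρ h1 h2 h3 => hC.2 x hx δ ρ h1 h2 h3⟩⟩
    · rintro s ⟨hs0, hloc⟩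
      refine ⟨hs0, fun δ₀ hδ₀ => ?_⟩
      obtain ⟨M, c₁, c₂, hM, hc₁, hc₂, hEH⟩ := heh δ₀ hδ₀
      obtain ⟨C₀, hC₀pos, hC₀⟩ := hloc (c₁ * δ₀) (by positivity)
      have hMpos : (0:ℝ) < M := lt_of_lt_of_le one_pos hM
      refine ⟨max M (M * (C₀ * (c₁ / c₂) ^ s)),
        lt_of_lt_of_le hMpos (le_max_left _ _), ?_⟩
      intro y hy δ ρ hρ hρδ hδ
      have hδpos : 0 < δ := hρ.trans hρδ
      have hdrpos : 0 < δ / ρ := div_pos hδpos hρ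
      have h1 : coverNumber (closedBall y δ ∩ F) ρ ≤
          ENNReal.ofReal M * coverNumber (closedBall x (c₁ * δ) ∩ F) (c₂ * ρ) :=
        (le_iSup₂ (f := fun z (_ : z ∈ F) => coverNumber (closedBall z δ ∩ F) ρ)
          y hy).trans ((hEH δ ρ hρ hρδ hδ).trans
            (mul_le_mul_right (iInf_le_of_le x (iInf_le _ hx)) _))
      rcases lt_or_ge (c₂ * ρ) (c₁ * δ) with hcase | hcase
      · have h2 := hC₀ (c₁ * δ) (c₂ * ρ) (by positivity) hcase
          (by nlinarith)
        refine h1.trans ?_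
        calc ENNReal.ofReal M * coverNumber (closedBall x (c₁ * δ) ∩ F) (c₂ * ρ)
            ≤ ENNReal.ofReal M * ENNReal.ofReal (C₀ * ((c₁ * δ) / (c₂ * ρ)) ^ s) :=
              mul_le_mul_right h2 _
          _ = ENNReal.ofReal (M * (C₀ * ((c₁ * δ) / (c₂ * ρ)) ^ s)) :=
              (ENNReal.ofReal_mul hMpos.le).symm
          _ ≤ ENNReal.ofReal (max M (M * (C₀ * (c₁ / c₂) ^ s)) * (δ / ρ) ^ s) := by
              apply ENNReal.ofReal_le_ofReal
              have he : (c₁ * δ) / (c₂ * ρ) = (c₁ / c₂) * (δ / ρ) :=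
                (div_mul_div_comm c₁ c₂ δ ρ).symm
              rw [he, Real.mul_rpow (div_pos hc₁ hc₂).le hdrpos.le]
              have h3 : M * (C₀ * ((c₁ / c₂) ^ s * (δ / ρ) ^ s))
                  = (M * (C₀ * (c₁ / c₂) ^ s)) * (δ / ρ) ^ s := by ring
              rw [h3]
              exact mul_le_mul_of_nonneg_right (le_max_right _ _)
                (Real.rpow_nonneg hdrpos.le s)
      · have h2 : coverNumber (closedBall x (c₁ * δ) ∩ F) (c₂ * ρ) ≤ 1 := by
          refine coverNumber_le_one ⟨mem_closedBall_self (by positivity), hx⟩ ?_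
          rintro z ⟨hz, -⟩
          exact le_trans (mem_closedBall.1 hz) hcase
        refine h1.trans ?_
        calc ENNReal.ofReal M * coverNumber (closedBall x (c₁ * δ) ∩ F) (c₂ * ρ)
            ≤ ENNReal.ofReal M * 1 := mul_le_mul_right h2 _
          _ = ENNReal.ofReal M := mul_one _
          _ ≤ ENNReal.ofReal (max M (M * (C₀ * (c₁ / c₂) ^ s)) * (δ / ρ) ^ s) := by
              apply ENNReal.ofReal_le_ofReal
              have h3 : (1:ℝ) ≤ (δ / ρ) ^ s :=
                Real.one_le_rpow ((one_le_div hρ).2 hρδ.le) hs0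
              nlinarith [le_max_left M (M * (C₀ * (c₁ / c₂) ^ s))]
  · -- lower Assouad dimension
    unfold lowerAssouadDim
    refine congrArg sSup (Set.Subset.antisymm ?_ ?_)
    · rintro s ⟨hs0, h⟩
      exact ⟨hs0, fun δ₀ hδ₀ => (h δ₀ hδ₀).imp fun C hC =>
        ⟨hC.1, fun δ ρ h1 h2 h3 => hC.2 x hx δ ρ h1 h2 h3⟩⟩
    · rintro s ⟨hs0, hloc⟩
      refine ⟨hs0, fun δ₀ hδ₀ => ?_⟩
      obtain ⟨M, c₁, c₂, hM, hc₁, hc₂, hEH⟩ := equiHomogeneous_upgrade heh δ₀ hδ₀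
      obtain ⟨C₀, hC₀pos, hC₀⟩ := hloc δ₀ hδ₀
      have hMpos : (0:ℝ) < M := lt_of_lt_of_le one_pos hM
      have hc₁pos : (0:ℝ) < c₁ := lt_of_lt_of_le one_pos hc₁
      have hccpos : (0:ℝ) < c₂ / c₁ := div_pos hc₂ hc₁pos
      have hrpos : (0:ℝ) < (c₂ / c₁) ^ s := Real.rpow_pos_of_pos hccpos s
      refine ⟨min 1 (M⁻¹ * C₀) * (c₂ / c₁) ^ s,
        mul_pos (lt_min one_pos (mul_pos (inv_pos.2 hMpos) hC₀pos)) hrpos, ?_⟩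
      intro y hy δ ρ hρ hρδ hδ
      have hδpos : 0 < δ := hρ.trans hρδ
      have hdrpos : 0 < δ / ρ := div_pos hδpos hρ
      rcases lt_or_ge (ρ / c₂) (δ / c₁) with hcase | hcase
      · -- good case
        have h3 : coverNumber (closedBall x (δ / c₁) ∩ F) (ρ / c₂) ≤
            ENNReal.ofReal M * coverNumber (closedBall y δ ∩ F) ρ := by
          have hh := (le_iSup₂ (f := fun z (_ : z ∈ F) =>
              coverNumber (closedBall z (δ / c₁) ∩ F) (ρ / c₂)) x hx).trans
            ((hEH (δ / c₁) (ρ / c₂) (div_pos hρ hc₂) hcase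
              (le_trans (div_le_self hδpos.le hc₁) hδ)).trans
              (mul_le_mul_right (iInf_le_of_le y (iInf_le _ hy)) _))
          have e1 : c₁ * (δ / c₁) = δ := by field_simp
          have e2 : c₂ * (ρ / c₂) = ρ := by field_simp
          rwa [e1, e2] at hh
        have h4 := hC₀ (δ / c₁) (ρ / c₂) (div_pos hρ hc₂) hcase
          (le_trans (div_le_self hδpos.le hc₁) hδ)
        have h5 : ENNReal.ofReal (C₀ * ((δ / c₁) / (ρ / c₂)) ^ s) ≤
            ENNReal.ofReal M * coverNumber (closedBall y δ ∩ F) ρ := h4.trans h3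
        have h6 : ENNReal.ofReal (M⁻¹ * (C₀ * ((δ / c₁) / (ρ / c₂)) ^ s)) ≤
            coverNumber (closedBall y δ ∩ F) ρ := by
          rw [ENNReal.ofReal_mul (inv_pos.2 hMpos).le]
          calc ENNReal.ofReal M⁻¹ * ENNReal.ofReal (C₀ * ((δ / c₁) / (ρ / c₂)) ^ s)
              ≤ ENNReal.ofReal M⁻¹ *
                  (ENNReal.ofReal M * coverNumber (closedBall y δ ∩ F) ρ) :=
                mul_le_mul_right h5 _
            _ = (ENNReal.ofReal M⁻¹ * ENNReal.ofReal M) *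
                  coverNumber (closedBall y δ ∩ F) ρ := (mul_assoc _ _ _).symm
            _ = coverNumber (closedBall y δ ∩ F) ρ := by
                rw [← ENNReal.ofReal_mul (inv_pos.2 hMpos).le,
                  inv_mul_cancel₀ hMpos.ne']
                simp
        refine le_trans (ENNReal.ofReal_le_ofReal ?_) h6
        have he : (δ / c₁) / (ρ / c₂) = (c₂ / c₁) * (δ / ρ) := by
          field_simp
        rw [he, Real.mul_rpow hccpos.le hdrpos.le]
        have hCle : min 1 (M⁻¹ * C₀) ≤ M⁻¹ * C₀ := min_le_right _ _
        have hdr0 : (0:ℝ) ≤ (δ / ρ) ^ s := Real.rpow_nonneg hdrpos.le s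
        nlinarith [mul_nonneg hrpos.le hdr0]
      · -- trivial case
        have hN : (1:ℝ≥0∞) ≤ coverNumber (closedBall y δ ∩ F) ρ :=
          one_le_coverNumber (F' := closedBall y δ ∩ F)
            ⟨y, mem_closedBall_self hδpos.le, hy⟩ ρ
        refine le_trans ?_ hN
        apply ENNReal.ofReal_le_one.2
        have hdr : δ / ρ ≤ c₁ / c₂ := by
          rw [div_le_div_iff₀ hρ hc₂]
          have := (div_le_div_iff₀ hc₁pos hc₂).1 hcase
          linarith
        have h7 : (δ / ρ) ^ s ≤ (c₁ / c₂) ^ s :=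
          Real.rpow_le_rpow hdrpos.le hdr hs0
        have h8 : (c₂ / c₁ : ℝ) ^ s * (c₁ / c₂) ^ s = 1 := by
          rw [← Real.mul_rpow hccpos.le (div_pos hc₁pos hc₂).le]
          rw [div_mul_div_comm]
          rw [show c₂ * c₁ / (c₁ * c₂) = 1 by rw [mul_comm]; field_simp]
          exact Real.one_rpow s
        have h9 : min 1 (M⁻¹ * C₀) ≤ 1 := min_le_left _ _
        have h10 : (0:ℝ) < min 1 (M⁻¹ * C₀) :=
          lt_min one_pos (mul_pos (inv_pos.2 hMpos) hC₀pos)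
        calc min 1 (M⁻¹ * C₀) * (c₂ / c₁) ^ s * (δ / ρ) ^ s
            ≤ min 1 (M⁻¹ * C₀) * (c₂ / c₁) ^ s * (c₁ / c₂) ^ s :=
              mul_le_mul_of_nonneg_left h7 (mul_nonneg h10.le hrpos.le)
          _ = min 1 (M⁻¹ * C₀) * ((c₂ / c₁) ^ s * (c₁ / c₂) ^ s) := mul_assoc _ _ _
          _ = min 1 (M⁻¹ * C₀) := by rw [h8, mul_one]
          _ ≤ 1 := h9
end

section
/- For each α > 0 the set F_α = {n^{−α} : n ∈ ℕ} ∪ {0} ⊆ ℝ satisfies dim_LA F_α = 0, dim_LB F_α = dim_B F_α = 1/(1+α), and dim_A F_α = 1. -/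
open Set Metric Filter Bornology MeasureTheory
open scoped ENNReal NNReal

/-- The upper box-counting dimension of `F`. -/
noncomputable def upperBoxDim {X : Type*} [MetricSpace X] (F : Set X) : ℝ :=
  Filter.limsup (fun δ : ℝ => Real.log (coverNumber F δ).toReal / -Real.log δ)
    (nhdsWithin 0 (Set.Ioi 0))

/-- The lower box-counting dimension of `F`. -/
noncomputable def lowerBoxDim {X : Type*} [MetricSpace X] (F : Set X) : ℝ :=
  Filter.liminf (fun δ : ℝ => Real.log (coverNumber F δ).toReal / -Real.log δ)
    (nhdsWithin 0 (Set.Ioi 0))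

open Set Metric Real Filter Bornology
open scoped ENNReal NNReal



lemma coverNumber_le {X : Type*} [MetricSpace X] {F : Set X} {δ : ℝ} (t : Finset X)
    (h1 : (t : Set X) ⊆ F) (h2 : F ⊆ ⋃ x ∈ t, closedBall x δ) :
    coverNumber F δ ≤ t.card := by
  refine iInf_le_of_le t ?_
  rw [iInf_pos h1, iInf_pos h2]

lemma le_coverNumber_of_separated {X : Type*} [MetricSpace X] {F : Set X} {δ : ℝ}
    (s : Finset X) (hs : (s : Set X) ⊆ F)
    (hsep : ∀ x ∈ s, ∀ y ∈ s, x ≠ y → 2 * δ < dist x y) :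
    (s.card : ℝ≥0∞) ≤ coverNumber F δ := by
  refine le_iInf fun t => le_iInf fun ht => le_iInf fun hcov => ?_
  refine Nat.cast_le.mpr ?_
  classical
  have key : ∀ x ∈ s, ∃ y ∈ t, x ∈ closedBall y δ := by
    intro x hx
    have := hcov (hs hx)
    simpa using this
  choose! g hg1 hg2 using key
  refine Finset.card_le_card_of_injOn g (fun a ha => hg1 a ha) ?_
  intro a ha b hb hab
  by_contra hne
  have h1 := hg2 a ha
  have h2 := hg2 b hb
  have hda : dist a (g a) ≤ δ := mem_closedBall.mp h1
  have hdb : dist b (g a) ≤ δ := by rw [hab]; exact mem_closedBall.mp h2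
  have : dist a b ≤ 2 * δ := by
    calc dist a b ≤ dist a (g a) + dist (g a) b := dist_triangle a (g a) b
    _ ≤ δ + δ := add_le_add hda (by rw [dist_comm]; exact hdb)
    _ = 2 * δ := by ring
  exact absurd (hsep a ha b hb hne) (not_lt.mpr this)

lemma one_le_coverNumber_s14 {X : Type*} [MetricSpace X] {F : Set X} {δ : ℝ} (hF : F.Nonempty) :
    1 ≤ coverNumber F δ := by
  refine le_iInf fun t => le_iInf fun ht => le_iInf fun hcov => ?_
  obtain ⟨x, hx⟩ := hF
  have := hcov hx
  simp only [Set.mem_iUnion] at this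
  obtain ⟨y, hy, -⟩ := this
  have : 0 < t.card := Finset.card_pos.mpr ⟨y, hy⟩
  exact_mod_cast this

lemma coverNumber_le_card_s14 {X : Type*} [MetricSpace X] {δ : ℝ} (hδ : 0 ≤ δ) (s : Finset X) :
    coverNumber (s : Set X) δ ≤ s.card := by
  refine coverNumber_le s subset_rfl fun x hx => ?_
  exact Set.mem_biUnion hx (mem_closedBall_self hδ)

lemma exists_cover_of_subset_Icc {G : Set ℝ} {a b δ : ℝ} (hG : G ⊆ Icc a b)
    (hne : G.Nonempty) (hδ : 0 < δ) :
    ∃ t : Finset ℝ, (t : Set ℝ) ⊆ G ∧ (G ⊆ ⋃ x ∈ t, closedBall x δ) ∧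
      t.card ≤ ⌈(b - a) / δ⌉₊ + 1 := by
  classical
  obtain ⟨x₀, hx₀⟩ := hne
  set m := ⌈(b - a) / δ⌉₊ with hm
  have hgdef : ∀ k : ℕ, ∃ y, y ∈ G ∧
      ((G ∩ Icc (a + k * δ) (a + (k + 1) * δ)).Nonempty →
        y ∈ Icc (a + k * δ) (a + (k + 1) * δ)) := by
    intro k
    by_cases h : (G ∩ Icc (a + k * δ) (a + (k + 1) * δ)).Nonempty
    · exact ⟨h.choose, h.choose_spec.1, fun _ => h.choose_spec.2⟩
    · exact ⟨x₀, hx₀, fun hc => absurd hc h⟩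
  choose g hgG hgI using hgdef
  refine ⟨(Finset.range (m + 1)).image g, ?_, ?_, ?_⟩
  · intro y hy
    simp only [Finset.coe_image, Set.mem_image] at hy
    obtain ⟨k, -, rfl⟩ := hy
    exact hgG k
  · intro x hx
    have hxa : a ≤ x := (hG hx).1
    have hxb : x ≤ b := (hG hx).2
    set k := ⌊(x - a) / δ⌋₊ with hk
    have hnn : 0 ≤ (x - a) / δ := div_nonneg (by linarith) hδ.le
    have hkle : (k : ℝ) ≤ (x - a) / δ := Nat.floor_le hnn
    have hklt : (x - a) / δ < k + 1 := Nat.lt_floor_add_one _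
    have hkm : k ≤ m := by
      have h1 : (x - a) / δ ≤ (b - a) / δ := by
        gcongr <;> linarith
      have h2 : ((b - a) / δ : ℝ) ≤ m := Nat.le_ceil _
      have : (k : ℝ) ≤ m := by linarith
      exact_mod_cast this
    have hxI : x ∈ Icc (a + k * δ) (a + (k + 1) * δ) := by
      constructor
      · have := mul_le_mul_of_nonneg_right hkle hδ.le
        rw [div_mul_cancel₀ _ hδ.ne'] at this
        linarith
      · have := mul_le_mul_of_nonneg_right hklt.le hδ.le
        rw [div_mul_cancel₀ _ hδ.ne'] at this
        linarith
    have hcell : (G ∩ Icc (a + k * δ) (a + (k + 1) * δ)).Nonempty := ⟨x, hx, hxI⟩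
    have hgk := hgI k hcell
    refine Set.mem_biUnion (x := g k) ?_ ?_
    · exact Finset.mem_image_of_mem g (Finset.mem_range.mpr (Nat.lt_succ_of_le hkm))
    · rw [mem_closedBall]
      have := Real.dist_le_of_mem_Icc hxI hgk
      calc dist x (g k) ≤ a + (k + 1) * δ - (a + k * δ) := Real.dist_le_of_mem_Icc hxI hgk
      _ = δ := by ring
  · calc ((Finset.range (m + 1)).image g).card ≤ (Finset.range (m + 1)).card :=
        Finset.card_image_le
    _ = m + 1 := Finset.card_range _

lemma rpow_gap {α : ℝ} (hα : 0 < α) {x : ℝ} (hx : 1 ≤ x) :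
    α * (x + 1) ^ (-(α + 1)) ≤ x ^ (-α) - (x + 1) ^ (-α) := by
  have hx0 : (0 : ℝ) < x := lt_of_lt_of_le one_pos hx
  have hlt : x < x + 1 := by linarith
  have hcont : ContinuousOn (fun t : ℝ => t ^ (-α)) (Icc x (x + 1)) := by
    intro t ht
    exact (Real.continuousAt_rpow_const t (-α) (Or.inl (by nlinarith [ht.1]))).continuousWithinAt
  have hderiv : ∀ t ∈ Ioo x (x + 1),
      HasDerivAt (fun t : ℝ => t ^ (-α)) ((-α) * t ^ (-α - 1)) t := by
    intro t ht
    exact Real.hasDerivAt_rpow_const (Or.inl (by nlinarith [ht.1]))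
  obtain ⟨c, hc, hceq⟩ := exists_hasDerivAt_eq_slope (fun t : ℝ => t ^ (-α))
    (fun t => (-α) * t ^ (-α - 1)) hlt hcont hderiv
  have hc0 : 0 < c := lt_trans hx0 hc.1
  have : (x + 1) ^ (-α) - x ^ (-α) = (-α) * c ^ (-α - 1) := by
    rw [hceq]; field_simp; ring
  have hkey : x ^ (-α) - (x + 1) ^ (-α) = α * c ^ (-α - 1) := by linarith [this]
  rw [hkey]
  have : (x + 1) ^ (-(α + 1)) ≤ c ^ (-(α + 1)) :=
    Real.rpow_le_rpow_of_nonpos hc0 hc.2.le (by linarith)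
  have h2 : (x + 1) ^ (-(α + 1)) ≤ c ^ (-α - 1) := by
    rwa [show -α - 1 = -(α + 1) by ring]
  nlinarith
def Fa (α : ℝ) : Set ℝ := insert 0 {x : ℝ | ∃ n : ℕ, 1 ≤ n ∧ x = (n : ℝ) ^ (-α)}

variable {α : ℝ}

lemma zero_mem_Fa : (0 : ℝ) ∈ Fa α := Set.mem_insert _ _

lemma f_mem_Fa {n : ℕ} (hn : 1 ≤ n) : ((n : ℝ)) ^ (-α) ∈ Fa α :=
  Set.mem_insert_of_mem _ ⟨n, hn, rfl⟩

lemma f_anti (hα : 0 < α) {x y : ℝ} (hx : 0 < x) (hxy : x ≤ y) :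
    y ^ (-α) ≤ x ^ (-α) :=
  Real.rpow_le_rpow_of_nonpos hx hxy (by linarith)

lemma f_strict (hα : 0 < α) {x y : ℝ} (hx : 0 < x) (hxy : x < y) :
    y ^ (-α) < x ^ (-α) :=
  Real.rpow_lt_rpow_of_neg hx hxy (by linarith)

lemma f_sep (hα : 0 < α) {n m L : ℕ} (h1 : 1 ≤ n) (hnm : n < m) (hmL : m ≤ L) :
    α * (L : ℝ) ^ (-(α + 1)) ≤ (n : ℝ) ^ (-α) - (m : ℝ) ^ (-α) := by
  have hm2 : 2 ≤ m := by omega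
  have hmr : (1 : ℝ) ≤ (m : ℝ) - 1 := by
    have : (2 : ℝ) ≤ (m : ℝ) := by exact_mod_cast hm2
    linarith
  have hgap := rpow_gap hα hmr
  rw [show (m : ℝ) - 1 + 1 = (m : ℝ) by ring] at hgap
  have hnm' : (n : ℝ) ≤ (m : ℝ) - 1 := by
    have : (n : ℝ) + 1 ≤ (m : ℝ) := by exact_mod_cast hnm
    linarith
  have h1' : (0 : ℝ) < n := by exact_mod_cast h1
  have hfa : ((m : ℝ) - 1) ^ (-α) ≤ (n : ℝ) ^ (-α) := f_anti hα h1' hnm'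
  have hLa : (L : ℝ) ^ (-(α + 1)) ≤ (m : ℝ) ^ (-(α + 1)) := by
    have hm0 : (0 : ℝ) < m := by positivity
    exact Real.rpow_le_rpow_of_nonpos hm0 (by exact_mod_cast hmL) (by linarith)
  nlinarith

/-- `N` points `a, a+1, ..., a+N-1` mapped by `n ↦ n^{-α}` give a `2ρ`-separated
subset of `G`, so `N ≤ coverNumber G ρ`. -/
lemma card_le_coverNumber (hα : 0 < α) {G : Set ℝ} {ρ : ℝ} {a N : ℕ} (ha : 1 ≤ a)
    (hsub : ∀ k < N, (((a + k : ℕ) : ℝ)) ^ (-α) ∈ G)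
    (hρ : 2 * ρ < α * (((a + N : ℕ) : ℝ)) ^ (-(α + 1))) :
    (N : ℝ≥0∞) ≤ coverNumber G ρ := by
  classical
  set f : ℕ → ℝ := fun k => (((a + k : ℕ) : ℝ)) ^ (-α) with hf
  have hstrict : ∀ k l : ℕ, k < l → f l < f k := by
    intro k l hkl
    apply f_strict hα
    · have : 1 ≤ a + k := by omega
      exact_mod_cast Nat.lt_of_lt_of_le Nat.zero_lt_one (by exact_mod_cast this)
    · exact_mod_cast (by omega : a + k < a + l)
  have hinj : Set.InjOn f (Finset.range N : Set ℕ) := by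
    intro k _ l _ hkl
    rcases lt_trichotomy k l with h | h | h
    · exact absurd hkl (ne_of_gt (hstrict k l h)).symm.symm
    · exact h
    · exact absurd hkl (ne_of_gt (hstrict l k h)).symm
  set s : Finset ℝ := (Finset.range N).image f with hs
  have hcard : s.card = N := by
    rw [hs, Finset.card_image_of_injOn hinj, Finset.card_range]
  have hsepgen : ∀ k l : ℕ, k < N → l < N → k < l → 2 * ρ < dist (f k) (f l) := by
    intro k l hk hl hkl
    have hd : α * (((a + N : ℕ) : ℝ)) ^ (-(α + 1)) ≤ f k - f l := by
      have := f_sep hα (n := a + k) (m := a + l) (L := a + N)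
        (by omega) (by omega) (by omega)
      simpa [hf] using this
    have hpos : 0 < f k - f l := lt_of_lt_of_le (by positivity) hd
    rw [Real.dist_eq, abs_of_pos hpos]
    linarith
  rw [← hcard]
  apply le_coverNumber_of_separated s
  · intro x hx
    simp only [hs, Finset.coe_image, Set.mem_image, Finset.coe_range, Set.mem_Iio] at hx
    obtain ⟨k, hk, rfl⟩ := hx
    exact hsub k hk
  · intro x hx y hy hxy
    simp only [hs, Finset.mem_image, Finset.mem_range] at hx hy
    obtain ⟨k, hk, rfl⟩ := hx
    obtain ⟨l, hl, rfl⟩ := hy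
    rcases lt_trichotomy k l with h | h | h
    · exact hsepgen k l hk hl h
    · exact absurd (by rw [h]) hxy
    · rw [dist_comm]; exact hsepgen l k hl hk h

lemma coverNumber_Fa_le (hα : 0 < α) {δ : ℝ} (hδ : 0 < δ) (N : ℕ) (hN : 1 ≤ N) :
    coverNumber (Fa α) δ ≤ ((N + (⌈(N : ℝ) ^ (-α) / δ⌉₊ + 1) : ℕ) : ℝ≥0∞) := by
  classical
  set L : ℝ := (N : ℝ) ^ (-α) with hL
  have hN0 : (0 : ℝ) < N := by exact_mod_cast hN
  have hL0 : 0 ≤ L := (Real.rpow_pos_of_pos hN0 _).le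
  set G : Set ℝ := Fa α ∩ Icc 0 L with hG
  have hGsub : G ⊆ Icc 0 L := Set.inter_subset_right
  have hGne : G.Nonempty := ⟨0, zero_mem_Fa, le_refl 0, hL0⟩
  obtain ⟨tB, htB1, htB2, htB3⟩ := exists_cover_of_subset_Icc hGsub hGne hδ
  rw [sub_zero] at htB3
  set tA : Finset ℝ := (Finset.range N).image (fun k => (((1 + k : ℕ) : ℝ)) ^ (-α)) with htA
  have htAcard : tA.card ≤ N := le_trans Finset.card_image_le (le_of_eq (Finset.card_range N))
  have htAF : (tA : Set ℝ) ⊆ Fa α := by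
    intro x hx
    simp only [htA, Finset.coe_image, Set.mem_image] at hx
    obtain ⟨k, -, rfl⟩ := hx
    exact f_mem_Fa (by omega)
  have htBF : (tB : Set ℝ) ⊆ Fa α := fun x hx => (htB1 hx).1
  refine le_trans (coverNumber_le (tA ∪ tB) ?_ ?_) ?_
  · intro x hx
    rcases Finset.mem_union.mp (by exact_mod_cast hx) with h | h
    · exact htAF h
    · exact htBF h
  · intro x hx
    have hcovG : ∀ y ∈ G, y ∈ ⋃ c ∈ (tA ∪ tB : Finset ℝ), closedBall c δ := by
      intro y hy
      have := htB2 hy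
      simp only [Set.mem_iUnion, exists_prop] at this ⊢
      obtain ⟨c, hc, hcy⟩ := this
      exact ⟨c, Finset.mem_union_right _ hc, hcy⟩
    rcases hx with rfl | ⟨n, hn1, rfl⟩
    · exact hcovG 0 ⟨zero_mem_Fa, le_refl 0, hL0⟩
    · by_cases hnN : n ≤ N
      · have hmem : ((n : ℝ)) ^ (-α) ∈ tA := by
          simp only [htA, Finset.mem_image, Finset.mem_range]
          exact ⟨n - 1, by omega, by congr 1; norm_cast; omega⟩
        exact Set.mem_biUnion (Finset.mem_union_left _ hmem) (mem_closedBall_self hδ.le)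
      · have hn0 : (0 : ℝ) < n := by positivity
        have : ((n : ℝ)) ^ (-α) ≤ L := f_anti hα hN0 (by exact_mod_cast le_of_not_ge hnN)
        exact hcovG _ ⟨f_mem_Fa hn1, (Real.rpow_pos_of_pos hn0 _).le, this⟩
  · have : (tA ∪ tB).card ≤ N + (⌈L / δ⌉₊ + 1) :=
      le_trans (Finset.card_union_le _ _) (add_le_add htAcard htB3)
    exact_mod_cast this

lemma theta_pos (hα : 0 < α) : 0 < (1 + α)⁻¹ := by positivity

lemma cover_upper_bound (hα : 0 < α) {δ : ℝ} (hδ : 0 < δ) (hδ1 : δ ≤ 1) :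
    coverNumber (Fa α) δ ≤ ENNReal.ofReal (5 * δ ^ (-(1 + α)⁻¹)) := by
  set θ : ℝ := (1 + α)⁻¹ with hθdef
  have hθ : 0 < θ := theta_pos hα
  set D : ℝ := δ ^ (-θ) with hD
  have hD0 : 0 < D := Real.rpow_pos_of_pos hδ _
  have hD1 : 1 ≤ D := by
    have := Real.rpow_le_rpow_of_nonpos hδ hδ1 (by linarith : -θ ≤ 0)
    rwa [Real.one_rpow] at this
  set N : ℕ := ⌈D⌉₊ with hN
  have hN1 : 1 ≤ N := Nat.one_le_ceil_iff.mpr hD0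
  have hND : D ≤ (N : ℝ) := Nat.le_ceil D
  have hND2 : (N : ℝ) ≤ 2 * D := by
    have := Nat.ceil_lt_add_one hD0.le
    have : (N : ℝ) < D + 1 := by exact_mod_cast this
    linarith
  refine le_trans (coverNumber_Fa_le hα hδ N hN1) ?_
  have hfrac : (N : ℝ) ^ (-α) / δ ≤ D := by
    have h1 : (N : ℝ) ^ (-α) ≤ D ^ (-α) :=
      Real.rpow_le_rpow_of_nonpos hD0 hND (by linarith)
    have h2 : D ^ (-α) = δ ^ (θ * α) := by
      rw [hD, ← Real.rpow_mul hδ.le]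
      ring_nf
    have h3 : δ ^ (θ * α) / δ = δ ^ (θ * α - 1) := by
      rw [Real.rpow_sub hδ, Real.rpow_one]
    have h4 : θ * α - 1 = -θ := by
      rw [hθdef]; field_simp; ring
    calc (N : ℝ) ^ (-α) / δ ≤ δ ^ (θ * α) / δ := by
          gcongr
          rw [← h2]; exact h1
    _ = D := by rw [h3, h4]
  have hceil : (⌈(N : ℝ) ^ (-α) / δ⌉₊ : ℝ) ≤ 2 * D := by
    have hnn : 0 ≤ (N : ℝ) ^ (-α) / δ := by positivity
    have := Nat.ceil_lt_add_one hnn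
    have h5 : (⌈(N : ℝ) ^ (-α) / δ⌉₊ : ℝ) < (N : ℝ) ^ (-α) / δ + 1 := by exact_mod_cast this
    linarith
  have htot : ((N + (⌈(N : ℝ) ^ (-α) / δ⌉₊ + 1) : ℕ) : ℝ) ≤ 5 * D := by
    push_cast
    linarith
  calc ((N + (⌈(N : ℝ) ^ (-α) / δ⌉₊ + 1) : ℕ) : ℝ≥0∞)
      = ENNReal.ofReal ((N + (⌈(N : ℝ) ^ (-α) / δ⌉₊ + 1) : ℕ) : ℝ) := by
        rw [ENNReal.ofReal_natCast]
  _ ≤ ENNReal.ofReal (5 * D) := ENNReal.ofReal_le_ofReal htot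

lemma cover_lower_bound (hα : 0 < α) :
    ∃ c δ₁ : ℝ, 0 < c ∧ 0 < δ₁ ∧ ∀ δ : ℝ, 0 < δ → δ ≤ δ₁ →
      ENNReal.ofReal (c * δ ^ (-(1 + α)⁻¹)) ≤ coverNumber (Fa α) δ := by
  set θ : ℝ := (1 + α)⁻¹ with hθdef
  have hθ : 0 < θ := theta_pos hα
  have hθ1 : θ * (1 + α) = 1 := by rw [hθdef]; field_simp
  set K : ℝ := 4 * 2 ^ (1 + α) with hK
  have hK0 : 0 < K := by positivity
  refine ⟨(α / K) ^ θ / 2, α / (K * 2 ^ (1 + α)), by positivity, by positivity, ?_⟩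
  intro δ hδ hδ1
  set E : ℝ := (α / (K * δ)) ^ θ with hE
  have hAKδ : 0 < α / (K * δ) := by positivity
  have hE0 : 0 < E := Real.rpow_pos_of_pos hAKδ _
  have hE2 : 2 ≤ E := by
    have h1 : 2 ^ (1 + α) ≤ α / (K * δ) := by
      rw [le_div_iff₀ (by positivity)]
      calc (2:ℝ) ^ (1 + α) * (K * δ) ≤ 2 ^ (1 + α) * (K * (α / (K * 2 ^ (1 + α)))) := by
            gcongr
      _ = α := by field_simp
    calc (2:ℝ) = ((2:ℝ) ^ (1 + α)) ^ θ := by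
          rw [← Real.rpow_mul (by norm_num), mul_comm (1+α) θ, hθ1, Real.rpow_one]
    _ ≤ E := Real.rpow_le_rpow (by positivity) h1 hθ.le
  set N : ℕ := ⌊E⌋₊ with hN
  have hNE : (N : ℝ) ≤ E := Nat.floor_le hE0.le
  have hN2 : 2 ≤ N := Nat.le_floor (by exact_mod_cast hE2)
  have hN1 : 1 ≤ N := by omega
  have hEN : E / 2 ≤ (N : ℝ) := by
    have := Nat.lt_floor_add_one E
    have h : E < (N : ℝ) + 1 := by exact_mod_cast this
    have hNr : (1 : ℝ) ≤ (N : ℝ) := by exact_mod_cast hN1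
    linarith
  -- separation condition
  have hE1α : E ^ (1 + α) = α / (K * δ) := by
    rw [hE, ← Real.rpow_mul hAKδ.le, mul_comm θ (1+α)]
    rw [show (1 + α) * θ = 1 from by rw [mul_comm]; exact hθ1, Real.rpow_one]
  have hsepcond : 2 * δ < α * (((1 + N : ℕ) : ℝ)) ^ (-(α + 1)) := by
    have hP0 : (0:ℝ) < ((1 + N : ℕ) : ℝ) := by positivity
    have hP : (((1 + N : ℕ) : ℝ)) ^ (α + 1) ≤ α / (4 * δ) := by
      have hb : ((1 + N : ℕ) : ℝ) ≤ 2 * E := by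
        push_cast
        have hNr : (1 : ℝ) ≤ (N : ℝ) := by exact_mod_cast hN1
        linarith
      calc (((1 + N : ℕ) : ℝ)) ^ (α + 1) ≤ (2 * E) ^ (α + 1) :=
            Real.rpow_le_rpow hP0.le hb (by linarith)
      _ = 2 ^ (α + 1) * E ^ (α + 1) := Real.mul_rpow (by norm_num) hE0.le
      _ = 2 ^ (1 + α) * (α / (K * δ)) := by
            rw [show α + 1 = 1 + α from by ring, hE1α]
      _ = α / (4 * δ) := by
            rw [hK]; field_simp
    have h4 : α / (4 * δ) < α / (2 * δ) := by
      apply div_lt_div_of_pos_left hα (by positivity) (by linarith)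
    have hPlt : (((1 + N : ℕ) : ℝ)) ^ (α + 1) < α / (2 * δ) := lt_of_le_of_lt hP h4
    have := (lt_div_iff₀ (by positivity : (0:ℝ) < 2 * δ)).mp hPlt
    rw [Real.rpow_neg hP0.le]
    rw [lt_mul_inv_iff₀ (Real.rpow_pos_of_pos hP0 _)] at *
    nlinarith [Real.rpow_pos_of_pos hP0 (α + 1)]
  have hcov : (N : ℝ≥0∞) ≤ coverNumber (Fa α) δ := by
    apply card_le_coverNumber hα (a := 1) le_rfl
    · intro k hk
      exact f_mem_Fa (by omega)
    · exact hsepcond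
  refine le_trans ?_ hcov
  have hreal : (α / K) ^ θ / 2 * δ ^ (-θ) ≤ (N : ℝ) := by
    have hsplit : E = (α / K) ^ θ * δ ^ (-θ) := by
      rw [hE, show α / (K * δ) = (α / K) * δ⁻¹ from by field_simp,
        Real.mul_rpow (by positivity) (by positivity),
        ← Real.rpow_neg_one δ, ← Real.rpow_mul hδ.le]
      norm_num
    calc (α / K) ^ θ / 2 * δ ^ (-θ) = E / 2 := by rw [hsplit]; ring
    _ ≤ (N : ℝ) := hEN
  calc ENNReal.ofReal ((α / K) ^ θ / 2 * δ ^ (-θ)) ≤ ENNReal.ofReal (N : ℝ) :=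
        ENNReal.ofReal_le_ofReal hreal
  _ = (N : ℝ≥0∞) := ENNReal.ofReal_natCast N



lemma box_tendsto (hα : 0 < α) :
    Tendsto (fun δ : ℝ => Real.log (coverNumber (Fa α) δ).toReal / -Real.log δ)
      (nhdsWithin 0 (Set.Ioi 0)) (nhds ((1 + α)⁻¹)) := by
  set θ : ℝ := (1 + α)⁻¹ with hθdef
  have hθ : 0 < θ := theta_pos hα
  obtain ⟨c, δ₁, hc, hδ₁, hlow⟩ := cover_lower_bound hα
  set δ₂ : ℝ := min δ₁ (1 / 2) with hδ₂def
  have hδ₂ : 0 < δ₂ := lt_min hδ₁ (by norm_num)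
  have hmem : Set.Ioo (0 : ℝ) δ₂ ∈ nhdsWithin (0 : ℝ) (Set.Ioi 0) :=
    Ioo_mem_nhdsGT_of_mem ⟨le_refl 0, hδ₂⟩
  have hneglog : Tendsto (fun δ : ℝ => -Real.log δ) (nhdsWithin 0 (Set.Ioi 0)) atTop := by
    have h := Real.tendsto_log_nhdsGT_zero
    exact tendsto_neg_atBot_atTop.comp h
  have htendc : ∀ b : ℝ, Tendsto (fun δ : ℝ => b / -Real.log δ + θ)
      (nhdsWithin 0 (Set.Ioi 0)) (nhds θ) := by
    intro b
    have h0 : Tendsto (fun δ : ℝ => b / -Real.log δ) (nhdsWithin 0 (Set.Ioi 0)) (nhds 0) :=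
      Tendsto.div_atTop tendsto_const_nhds hneglog
    simpa using h0.add tendsto_const_nhds
  have key : ∀ δ ∈ Set.Ioo (0:ℝ) δ₂,
      Real.log c / -Real.log δ + θ ≤ Real.log (coverNumber (Fa α) δ).toReal / -Real.log δ ∧
      Real.log (coverNumber (Fa α) δ).toReal / -Real.log δ ≤ Real.log 5 / -Real.log δ + θ := by
    intro δ hδmem
    obtain ⟨hδ0, hδlt⟩ := hδmem
    have hδ1' : δ ≤ δ₁ := le_of_lt (lt_of_lt_of_le hδlt (min_le_left _ _))
    have hδhalf : δ < 1 := lt_of_lt_of_le (lt_of_lt_of_le hδlt (min_le_right _ _)) (by norm_num)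
    have hlogδ : Real.log δ < 0 := Real.log_neg hδ0 hδhalf
    have hneg : 0 < -Real.log δ := by linarith
    have hD0 : (0:ℝ) < δ ^ (-θ) := Real.rpow_pos_of_pos hδ0 _
    have hu := cover_upper_bound hα hδ0 hδhalf.le
    have hl := hlow δ hδ0 hδ1'
    have hne : coverNumber (Fa α) δ ≠ ⊤ :=
      ne_top_of_le_ne_top ENNReal.ofReal_ne_top hu
    set r : ℝ := (coverNumber (Fa α) δ).toReal with hr
    have hru : r ≤ 5 * δ ^ (-θ) :=
      ENNReal.toReal_le_of_le_ofReal (by positivity) hu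
    have hrl : c * δ ^ (-θ) ≤ r := (ENNReal.ofReal_le_iff_le_toReal hne).mp hl
    have hr0 : 0 < r := lt_of_lt_of_le (by positivity) hrl
    have hlogr_l : Real.log c + -θ * Real.log δ ≤ Real.log r := by
      have := Real.log_le_log (by positivity) hrl
      rwa [Real.log_mul (ne_of_gt hc) (ne_of_gt hD0), Real.log_rpow hδ0] at this
    have hlogr_u : Real.log r ≤ Real.log 5 + -θ * Real.log δ := by
      have := Real.log_le_log hr0 hru
      rwa [Real.log_mul (by norm_num) (ne_of_gt hD0), Real.log_rpow hδ0] at this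
    have heq : ∀ b : ℝ, (b + -θ * Real.log δ) / -Real.log δ = b / -Real.log δ + θ := by
      intro b
      have hne0 : Real.log δ ≠ 0 := ne_of_lt hlogδ
      field_simp
      ring
    constructor
    · rw [← heq]
      gcongr
    · rw [← heq]
      gcongr
  refine tendsto_of_tendsto_of_tendsto_of_le_of_le' (htendc (Real.log c))
    (htendc (Real.log 5)) ?_ ?_
  · filter_upwards [hmem] with δ hδ using (key δ hδ).1
  · filter_upwards [hmem] with δ hδ using (key δ hδ).2


section
variable {α : ℝ}

lemma assouad_one_mem (hα : 0 < α) : (1 : ℝ) ∈ {s : ℝ | 0 ≤ s ∧ ∀ δ₀ : ℝ, 0 < δ₀ → ∃ C : ℝ, 0 < C ∧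
    ∀ x ∈ Fa α, ∀ δ ρ : ℝ, 0 < ρ → ρ < δ → δ ≤ δ₀ →
      coverNumber (closedBall x δ ∩ Fa α) ρ ≤ ENNReal.ofReal (C * (δ / ρ) ^ (1:ℝ))} := by
  refine ⟨zero_le_one, fun δ₀ hδ₀ => ⟨4, by norm_num, ?_⟩⟩
  intro x hx δ ρ hρ hρδ hδδ₀
  set G : Set ℝ := closedBall x δ ∩ Fa α with hG
  have hGsub : G ⊆ Set.Icc (x - δ) (x + δ) := by
    intro y hy
    have := hy.1
    rw [Real.closedBall_eq_Icc] at this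
    exact this
  have hratio : (1:ℝ) ≤ δ / ρ := (one_le_div hρ).mpr hρδ.le
  have hrpos : 0 < δ / ρ := by positivity
  rcases G.eq_empty_or_nonempty with hemp | hne
  · have h0 : coverNumber G ρ ≤ ((∅ : Finset ℝ).card : ℝ≥0∞) := by
      apply coverNumber_le ∅ (by simp) (by rw [hemp]; simp)
    simp only [Finset.card_empty, Nat.cast_zero, nonpos_iff_eq_zero] at h0
    rw [h0]
    exact zero_le
  · obtain ⟨t, ht1, ht2, ht3⟩ := exists_cover_of_subset_Icc hGsub hne hρ
    refine le_trans (coverNumber_le t ht1 ht2) ?_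
    have hcard : (t.card : ℝ) ≤ 4 * (δ / ρ) := by
      have hnn : 0 ≤ (x + δ - (x - δ)) / ρ := by
        apply div_nonneg _ hρ.le
        linarith
      have h1 : (⌈(x + δ - (x - δ)) / ρ⌉₊ : ℝ) < (x + δ - (x - δ)) / ρ + 1 :=
        by exact_mod_cast Nat.ceil_lt_add_one hnn
      have h2 : (x + δ - (x - δ)) / ρ = 2 * (δ / ρ) := by field_simp; ring
      have h3 : (t.card : ℝ) ≤ (⌈(x + δ - (x - δ)) / ρ⌉₊ : ℝ) + 1 := by exact_mod_cast ht3
      rw [h2] at h1 h3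
      linarith
    calc (t.card : ℝ≥0∞) = ENNReal.ofReal (t.card : ℝ) := (ENNReal.ofReal_natCast _).symm
    _ ≤ ENNReal.ofReal (4 * (δ / ρ) ^ (1:ℝ)) := by
        rw [Real.rpow_one]; exact ENNReal.ofReal_le_ofReal hcard

lemma assouad_ge_one (hα : 0 < α) {s : ℝ}
    (hs : s ∈ {s : ℝ | 0 ≤ s ∧ ∀ δ₀ : ℝ, 0 < δ₀ → ∃ C : ℝ, 0 < C ∧
    ∀ x ∈ Fa α, ∀ δ ρ : ℝ, 0 < ρ → ρ < δ → δ ≤ δ₀ →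
      coverNumber (closedBall x δ ∩ Fa α) ρ ≤ ENNReal.ofReal (C * (δ / ρ) ^ s)}) :
    1 ≤ s := by
  obtain ⟨hs0, hs1⟩ := hs
  by_contra hlt
  push_neg at hlt
  have h1s : 0 < 1 - s := by linarith
  obtain ⟨C, hC, hCb⟩ := hs1 1 one_pos
  set K : ℝ := 4 * 3 ^ (α + 1) / α with hKdef
  have hK0 : 0 < K := by positivity
  set B : ℝ := (C * K ^ s) ^ (1 - s)⁻¹ with hBdef
  have hCK0 : 0 < C * K ^ s := by positivity
  have hB0 : 0 < B := Real.rpow_pos_of_pos hCK0 _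
  set N : ℕ := ⌈α⌉₊ + ⌊max B 0⌋₊ + 2 with hNdef
  have hN1 : 1 ≤ N := by omega
  have hNr1 : (1:ℝ) ≤ (N:ℝ) := by exact_mod_cast hN1
  have hN0 : (0:ℝ) < N := by linarith
  have hNB : B < (N:ℝ) := by
    have h1 := Nat.lt_floor_add_one (max B 0)
    have h2 : (⌊max B 0⌋₊ : ℝ) + 2 ≤ (N : ℝ) := by
      have : ⌊max B 0⌋₊ + 2 ≤ N := by omega
      exact_mod_cast this
    have h3 : B ≤ max B 0 := le_max_left _ _
    linarith
  have hNα : α < 4 * (N:ℝ) := by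
    have h1 : α ≤ (⌈α⌉₊ : ℝ) := Nat.le_ceil α
    have h2 : (⌈α⌉₊ : ℝ) ≤ (N : ℝ) := by
      have : ⌈α⌉₊ ≤ N := by omega
      exact_mod_cast this
    linarith
  -- scales
  set δ : ℝ := (N:ℝ) ^ (-α) with hδdef
  have hδ0 : 0 < δ := Real.rpow_pos_of_pos hN0 _
  set P : ℝ := ((N + (N + 1) : ℕ) : ℝ) with hPdef
  have hP0 : (0:ℝ) < P := by rw [hPdef]; positivity
  have hPN : (N:ℝ) ≤ P := by rw [hPdef]; push_cast; linarith
  have hP3N : P ≤ 3 * (N:ℝ) := by rw [hPdef]; push_cast; linarith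
  set ρ : ℝ := α * P ^ (-(α + 1)) / 4 with hρdef
  have hPp : 0 < P ^ (-(α+1)) := Real.rpow_pos_of_pos hP0 _
  have hρ0 : 0 < ρ := by rw [hρdef]; positivity
  have hNsplit : (N:ℝ) ^ (-(α+1)) = (N:ℝ) ^ (-α) * ((N:ℝ)) ^ (-(1:ℝ)) := by
    rw [← Real.rpow_add hN0]; ring_nf
  have hρδ : ρ < δ := by
    have h1 : P ^ (-(α+1)) ≤ (N:ℝ) ^ (-(α+1)) :=
      Real.rpow_le_rpow_of_nonpos hN0 hPN (by linarith)
    have h2 : ρ ≤ α * ((N:ℝ) ^ (-α) * ((N:ℝ)) ^ (-(1:ℝ))) / 4 := by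
      rw [hρdef, ← hNsplit]
      gcongr
    have h3 : ((N:ℝ)) ^ (-(1:ℝ)) = ((N:ℝ))⁻¹ := by
      rw [Real.rpow_neg_one]
    have h4 : α * ((N:ℝ))⁻¹ < 4 := by
      have := (div_lt_iff₀ hN0).mpr (by linarith : α < 4 * (N:ℝ))
      calc α * ((N:ℝ))⁻¹ = α / (N:ℝ) := by ring
      _ < 4 := this
    have h5 : α * ((N:ℝ) ^ (-α) * ((N:ℝ))⁻¹) / 4 < δ := by
      rw [hδdef]
      have hpos : 0 < (N:ℝ) ^ (-α) := Real.rpow_pos_of_pos hN0 _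
      nlinarith
    rw [h3] at h2
    linarith
  have hδ1 : δ ≤ 1 := by
    have := f_anti hα one_pos hNr1
    rwa [Real.one_rpow] at this
  -- lower bound on covering number
  have hsub : ∀ k < N + 1, (((N + k : ℕ) : ℝ)) ^ (-α) ∈ closedBall (0:ℝ) δ ∩ Fa α := by
    intro k hk
    refine ⟨?_, f_mem_Fa (by omega)⟩
    rw [mem_closedBall, Real.dist_eq, sub_zero]
    have hnk : (0:ℝ) < ((N + k : ℕ) : ℝ) := by positivity
    rw [abs_of_pos (Real.rpow_pos_of_pos hnk _)]
    exact f_anti hα hN0 (by exact_mod_cast Nat.le_add_right N k)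
  have hsep : 2 * ρ < α * (((N + (N + 1) : ℕ) : ℝ)) ^ (-(α + 1)) := by
    rw [← hPdef, hρdef]
    have : 0 < α * P ^ (-(α+1)) := by positivity
    linarith
  have hlower : ((N + 1 : ℕ) : ℝ≥0∞) ≤ coverNumber (closedBall (0:ℝ) δ ∩ Fa α) ρ :=
    card_le_coverNumber hα (a := N) (N := N + 1) hN1 hsub hsep
  have hupper := hCb 0 zero_mem_Fa δ ρ hρ0 hρδ hδ1
  have hchain : ((N + 1 : ℕ) : ℝ) ≤ C * (δ / ρ) ^ s := by
    have h := le_trans hlower hupper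
    rw [← ENNReal.ofReal_natCast (N + 1)] at h
    exact (ENNReal.ofReal_le_ofReal_iff (by positivity)).mp h
  -- ratio bound
  have hratio : δ / ρ ≤ K * (N:ℝ) := by
    have hPinv : P ^ (-(α+1)) = (P ^ (α+1))⁻¹ := Real.rpow_neg hP0.le _
    have hPp2 : 0 < P ^ (α+1) := Real.rpow_pos_of_pos hP0 _
    have heq : δ / ρ = 4 * ((N:ℝ) ^ (-α) * P ^ (α+1)) / α := by
      rw [hδdef, hρdef, hPinv]
      field_simp
    have hP31 : P ^ (α+1) ≤ (3 * (N:ℝ)) ^ (α+1) :=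
      Real.rpow_le_rpow hP0.le hP3N (by linarith)
    have hsplit : (3 * (N:ℝ)) ^ (α+1) = 3 ^ (α+1) * (N:ℝ) ^ (α+1) :=
      Real.mul_rpow (by norm_num) hN0.le
    have hNN : (N:ℝ) ^ (-α) * (N:ℝ) ^ (α+1) = (N:ℝ) := by
      rw [← Real.rpow_add hN0]
      ring_nf
      exact Real.rpow_one _
    rw [heq]
    have hNa : 0 < (N:ℝ) ^ (-α) := Real.rpow_pos_of_pos hN0 _
    calc 4 * ((N:ℝ) ^ (-α) * P ^ (α+1)) / α
        ≤ 4 * ((N:ℝ) ^ (-α) * (3 ^ (α+1) * (N:ℝ) ^ (α+1))) / α := by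
          rw [← hsplit]; gcongr
    _ = 4 * 3 ^ (α+1) * ((N:ℝ) ^ (-α) * (N:ℝ) ^ (α+1)) / α := by ring
    _ = K * (N:ℝ) := by rw [hNN, hKdef]; ring
  have hratio0 : 0 ≤ δ / ρ := by positivity
  have hfinal : ((N:ℝ)) ^ (1 - s) ≤ C * K ^ s := by
    have h1 : (δ / ρ) ^ s ≤ (K * (N:ℝ)) ^ s := Real.rpow_le_rpow hratio0 hratio hs0
    have h2 : (K * (N:ℝ)) ^ s = K ^ s * (N:ℝ) ^ s := Real.mul_rpow hK0.le hN0.le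
    have h3 : (N:ℝ) ≤ C * K ^ s * (N:ℝ) ^ s := by
      have : ((N + 1 : ℕ) : ℝ) ≤ C * (K ^ s * (N:ℝ) ^ s) := by
        calc ((N + 1 : ℕ) : ℝ) ≤ C * (δ / ρ) ^ s := hchain
        _ ≤ C * (K * (N:ℝ)) ^ s := by gcongr
        _ = C * (K ^ s * (N:ℝ) ^ s) := by rw [h2]
      have hcast : ((N:ℝ)) ≤ ((N + 1 : ℕ) : ℝ) := by push_cast; linarith
      linarith
    have hNs : 0 < (N:ℝ) ^ s := Real.rpow_pos_of_pos hN0 _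
    have h4 : (N:ℝ) ^ (1 - s) * (N:ℝ) ^ s = (N:ℝ) := by
      rw [← Real.rpow_add hN0]
      ring_nf
      exact Real.rpow_one _
    have h5 : (N:ℝ) ^ (1 - s) * (N:ℝ) ^ s ≤ C * K ^ s * (N:ℝ) ^ s := by
      rw [h4]; exact h3
    exact le_of_mul_le_mul_right h5 hNs
  have hBpow : B ^ (1 - s) = C * K ^ s := by
    rw [hBdef, ← Real.rpow_mul hCK0.le, inv_mul_cancel₀ (ne_of_gt h1s), Real.rpow_one]
  have hcontr : B ^ (1 - s) < ((N:ℝ)) ^ (1 - s) :=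
    Real.rpow_lt_rpow hB0.le hNB h1s
  rw [hBpow] at hcontr
  linarith
end

section
variable {α : ℝ}

lemma upperBoxDim_Fa (hα : 0 < α) : upperBoxDim (Fa α) = 1 / (1 + α) := by
  rw [upperBoxDim, (box_tendsto hα).limsup_eq, one_div]

lemma lowerBoxDim_Fa (hα : 0 < α) : lowerBoxDim (Fa α) = 1 / (1 + α) := by
  rw [lowerBoxDim, (box_tendsto hα).liminf_eq, one_div]

lemma assouadDim_Fa (hα : 0 < α) : assouadDim (Fa α) = 1 := by
  rw [assouadDim]
  apply le_antisymm
  · exact csInf_le ⟨0, fun s hs => hs.1⟩ (assouad_one_mem hα)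
  · exact le_csInf ⟨1, assouad_one_mem hα⟩ (fun s hs => assouad_ge_one hα hs)

lemma lowerAssouadDim_Fa (hα : 0 < α) : lowerAssouadDim (Fa α) = 0 := by
  rw [lowerAssouadDim]
  have hset : {s : ℝ | 0 ≤ s ∧ ∀ δ₀ : ℝ, 0 < δ₀ → ∃ C : ℝ, 0 < C ∧
      ∀ x ∈ Fa α, ∀ δ ρ : ℝ, 0 < ρ → ρ < δ → δ ≤ δ₀ →
        ENNReal.ofReal (C * (δ / ρ) ^ s) ≤ coverNumber (closedBall x δ ∩ Fa α) ρ} = {0} := by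
    apply Set.eq_singleton_iff_unique_mem.mpr
    constructor
    · refine ⟨le_refl 0, fun δ₀ hδ₀ => ⟨1, one_pos, ?_⟩⟩
      intro x hx δ ρ hρ hρδ hδδ₀
      have hδ0 : 0 < δ := lt_trans hρ hρδ
      have hne : (closedBall x δ ∩ Fa α).Nonempty := ⟨x, mem_closedBall_self hδ0.le, hx⟩
      have h1 : 1 * (δ / ρ) ^ (0:ℝ) = 1 := by
        rw [Real.rpow_zero, mul_one]
      rw [h1, ENNReal.ofReal_one]
      exact one_le_coverNumber_s14 hne
    · intro s hs
      obtain ⟨hs0, h⟩ := hs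
      by_contra hne0
      have hpos : 0 < s := lt_of_le_of_ne hs0 (Ne.symm hne0)
      have h2lt1 : (2:ℝ) ^ (-α) < 1 :=
        Real.rpow_lt_one_of_one_lt_of_neg (by norm_num) (by linarith)
      have h2pos : (0:ℝ) < (2:ℝ) ^ (-α) := by positivity
      set δ₀ : ℝ := (1 - 2 ^ (-α)) / 2 with hδ₀def
      have hδ₀ : 0 < δ₀ := by rw [hδ₀def]; linarith
      obtain ⟨C, hC, hCb⟩ := h δ₀ hδ₀
      have one_mem : (1:ℝ) ∈ Fa α := by
        have := f_mem_Fa (α := α) (n := 1) le_rfl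
        simpa using this
      have hsingle : closedBall (1:ℝ) δ₀ ∩ Fa α = {1} := by
        apply Set.eq_singleton_iff_unique_mem.mpr
        refine ⟨⟨mem_closedBall_self hδ₀.le, one_mem⟩, ?_⟩
        rintro y ⟨hy1, hy2⟩
        rw [mem_closedBall, Real.dist_eq] at hy1
        rcases hy2 with rfl | ⟨n, hn1, rfl⟩
        · exfalso
          rw [abs_of_nonpos (by linarith)] at hy1
          rw [hδ₀def] at hy1
          linarith
        · rcases eq_or_lt_of_le hn1 with heq | hlt2
          · rw [← heq]; norm_num
          · exfalso
            have hn2 : (2:ℕ) ≤ n := hlt2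
            have hfn : ((n:ℝ)) ^ (-α) ≤ (2:ℝ) ^ (-α) := by
              have : ((2:ℕ):ℝ) ≤ (n:ℝ) := by exact_mod_cast hn2
              have h2 := f_anti hα (by norm_num : (0:ℝ) < 2) this
              simpa using h2
            have hfpos : (0:ℝ) < ((n:ℝ)) ^ (-α) :=
              Real.rpow_pos_of_pos (by positivity) _
            rw [abs_of_nonpos (by linarith)] at hy1
            rw [hδ₀def] at hy1
            linarith
      set R : ℝ := max 2 ((2 / C) ^ (s⁻¹ : ℝ)) with hRdef
      have hR2 : (2:ℝ) ≤ R := le_max_left _ _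
      have hR0 : 0 < R := by linarith
      set ρ : ℝ := δ₀ / R with hρdef
      have hρ0 : 0 < ρ := by positivity
      have hρδ : ρ < δ₀ := by
        rw [hρdef]
        exact div_lt_self hδ₀ (by linarith)
      have hineq := hCb 1 one_mem δ₀ ρ hρ0 hρδ le_rfl
      rw [hsingle] at hineq
      have hcov1 : coverNumber ({1} : Set ℝ) ρ ≤ 1 := by
        have := coverNumber_le_card_s14 hρ0.le ({1} : Finset ℝ)
        simpa using this
      have hratio : δ₀ / ρ = R := by
        rw [hρdef]
        field_simp
      have hRs : 2 / C ≤ R ^ s := by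
        have h1 : (2 / C) ^ (s⁻¹ : ℝ) ≤ R := le_max_right _ _
        have h2 : ((2 / C) ^ (s⁻¹ : ℝ)) ^ s ≤ R ^ s :=
          Real.rpow_le_rpow (by positivity) h1 hs0
        rwa [← Real.rpow_mul (by positivity), inv_mul_cancel₀ (ne_of_gt hpos),
          Real.rpow_one] at h2
      have h2CR : (2:ℝ) ≤ C * (δ₀ / ρ) ^ s := by
        rw [hratio]
        calc (2:ℝ) = C * (2 / C) := by field_simp
        _ ≤ C * R ^ s := by gcongr
      have : ENNReal.ofReal 2 ≤ 1 := le_trans (le_trans (ENNReal.ofReal_le_ofReal h2CR) hineq) hcov1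
      rw [ENNReal.ofReal_le_one] at this
      linarith
  rw [hset, csSup_singleton]
end


/-- For each `α > 0`, `F_α = {n^{-α} : n ∈ ℕ} ∪ {0}` satisfies
`dim_LA F_α = 0`, `dim_LB F_α = dim_B F_α = 1/(1+α)` and `dim_A F_α = 1`. -/
theorem dims_of_inverse_powers (α : ℝ) (hα : 0 < α) (Fα : Set ℝ)
    (hFα : Fα = insert (0 : ℝ) {x : ℝ | ∃ n : ℕ, 1 ≤ n ∧ x = (n : ℝ) ^ (-α)}) :
    lowerAssouadDim Fα = 0 ∧
    lowerBoxDim Fα = 1 / (1 + α) ∧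
    upperBoxDim Fα = 1 / (1 + α) ∧
    assouadDim Fα = 1 := by
  have h : Fα = Fa α := hFα
  subst h
  exact ⟨lowerAssouadDim_Fa hα, lowerBoxDim_Fa hα, upperBoxDim_Fa hα, assouadDim_Fa hα⟩
end
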